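/- Let A be an associative k-algebra with subalgebra R, and let e be an idempotent in R such that ReR = R. Write 1 = Σ_i p_i e q_i with p_i, q_i ∈ R, and define Tr: A → eAe by Tr(a) = Σ_i e q_i a p_i e. Then Tr sends commutators to commutators, i.e., Tr(ab - ba) ∈ [eAe, eAe] for all a, b ∈ A. -/

import Mathlib

/-- Let `A` be an associative `k`-algebra with subalgebra `R`, and let `e` be an idempotent in `R`
such that `ReR = R`, witnessed by a decomposition `1 = ∑ i, p i * e * q i` with `p i, q i ∈ R`.
Define the trace map `Tr : A → eAe` by `Tr a = ∑ i, e * q i * a * (p i * e)`.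
Then `Tr` sends commutators to commutators: `Tr (a * b - b * a)` lies in the `k`-linear span
`[eAe, eAe]` of commutators of the (non-unital) algebra `eAe`. -/
theorem trace_sends_commutators_to_commutators
    {k : Type*} [Field k] [CharZero k] {A : Type*} [Ring A] [Algebra k A]
    (R : Subalgebra k A) (e : A) (he : e ∈ R) (hidem : e * e = e)
    {ι : Type*} [Fintype ι] (p q : ι → A)
    (hp : ∀ i, p i ∈ R) (hq : ∀ i, q i ∈ R)
    (hdec : (1 : A) = ∑ i, p i * e * q i)
    (a b : A) :
    (∑ i, e * q i * (a * b - b * a) * (p i * e)) ∈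
      Submodule.span k
        {z : A | ∃ x y : A, z = (e * x * e) * (e * y * e) - (e * y * e) * (e * x * e)} := by
  have hee : ∀ x : A, e * (e * x) = e * x := by
    intro x; rw [← mul_assoc, hidem]
  have hexp : ∀ u v : A, (∀ i, e * q i * (u * v) * (p i * e)
      = ∑ j, (e * (q i * u * p j) * e) * (e * (q j * v * p i) * e)) := by
    intro u v i
    have h1 : u * v = ∑ j, u * (p j * e * q j) * v := by
      rw [← Finset.sum_mul, ← Finset.mul_sum, ← hdec, mul_one]
    rw [h1]
    simp only [Finset.mul_sum, Finset.sum_mul]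
    refine Finset.sum_congr rfl fun j _ => ?_
    simp only [mul_assoc, hee]
  have key : (∑ i, e * q i * (a * b - b * a) * (p i * e)) =
      ∑ i, ∑ j, ((e * (q i * a * p j) * e) * (e * (q j * b * p i) * e)
        - (e * (q j * b * p i) * e) * (e * (q i * a * p j) * e)) := by
    have : (∑ i, e * q i * (a * b - b * a) * (p i * e))
        = (∑ i, e * q i * (a * b) * (p i * e)) - ∑ i, e * q i * (b * a) * (p i * e) := by
      rw [← Finset.sum_sub_distrib]
      refine Finset.sum_congr rfl fun i _ => ?_
      rw [mul_sub, sub_mul]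
    rw [this]
    have hab : (∑ i, e * q i * (a * b) * (p i * e))
        = ∑ i, ∑ j, (e * (q i * a * p j) * e) * (e * (q j * b * p i) * e) :=
      Finset.sum_congr rfl fun i _ => hexp a b i
    have hba : (∑ i, e * q i * (b * a) * (p i * e))
        = ∑ i, ∑ j, (e * (q j * b * p i) * e) * (e * (q i * a * p j) * e) := by
      rw [Finset.sum_congr rfl fun i _ => hexp b a i, Finset.sum_comm]
    rw [hab, hba, ← Finset.sum_sub_distrib]
    exact Finset.sum_congr rfl fun i _ => (Finset.sum_sub_distrib _ _).symm
  rw [key]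
  refine Submodule.sum_mem _ fun i _ => Submodule.sum_mem _ fun j _ =>
    Submodule.subset_span ⟨q i * a * p j, q j * b * p i, rfl⟩
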